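/- Let H be a real Hilbert space and let A : H → Set H be maximally monotone with Z := {z ∈ H : 0 ∈ A z} nonempty. Let x̄ ∈ Z and assume the metric subregularity condition: there exist κ > 0 and δ > 0 such that for every w with ‖w − x̄‖ ≤ δ and every u ∈ A w, infDist(w, Z) ≤ κ·‖u‖. Let (c_k)_{k∈ℕ} be positive reals with c := inf_k c_k > 0, and for each k let J_k : H → H satisfy (1/c_k)·(w − J_k w) ∈ A(J_k w) for every w ∈ H (so J_k is the resolvent of c_k A). Let (λ_k)_{k∈ℕ} satisfy 0 < inf_k λ_k and sup_k λ_k < 2, let x_0 ∈ H with ‖x_0 − x̄‖ ≤ δ, and define the exact generalized proximal point iteration x_{k+1} := (1−λ_k)x_k + λ_k·(J_k x_k). Set ρ := sup_k (1 − λ_k(2−λ_k)/(1 + κ/c_k)²). Then ρ < 1 and there exists x̂ ∈ Z such that ‖x_k − x̂‖ ≤ 2·ρ^{k/2}·infDist(x_0, Z) for all k ∈ ℕ; in particular (x_k) converges R-linearly to a zero of A. -/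

import Mathlib

open scoped RealInnerProductSpace


private lemma le_infDist_aux {α : Type*} [MetricSpace α] {s : Set α} (hs : s.Nonempty)
    {x : α} {b : ℝ} (h : ∀ y ∈ s, b ≤ dist x y) : b ≤ Metric.infDist x s := by
  by_contra hlt
  push_neg at hlt
  obtain ⟨y, hy, hd⟩ := (Metric.infDist_lt_iff hs).1 hlt
  exact absurd (h y hy) (by linarith)


set_option maxHeartbeats 2000000

/-- R-linear convergence of the exact generalized proximal point algorithm:
`A` maximally monotone with `Z := zer A` nonempty, metric subregularity at `x̄ ∈ Z` with
constants `κ > 0`, `δ > 0`, resolvents `J_k` of `c_k A` with `inf_k c_k > 0`,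
relaxation parameters with `0 < inf_k λ_k` and `sup_k λ_k < 2`, `‖x_0 - x̄‖ ≤ δ`, and
`x_{k+1} = (1-λ_k)x_k + λ_k J_k x_k`.  With
`ρ := sup_k (1 - λ_k(2-λ_k)/(1 + κ/c_k)²)` one has `ρ < 1` and there exists `x̂ ∈ Z`
with `‖x_k - x̂‖ ≤ 2ρ^{k/2}·d(x_0, Z)` for all `k`; in particular `x_k → x̂ ∈ Z`
(R-linearly). -/
theorem stmt_19 {H : Type*} [NormedAddCommGroup H] [InnerProductSpace ℝ H] [CompleteSpace H]
    (A : H → Set H)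
    (hmono : ∀ x y u v : H, u ∈ A x → v ∈ A y → 0 ≤ ⟪x - y, u - v⟫)
    (hmax : ∀ x u : H, (∀ y v : H, v ∈ A y → 0 ≤ ⟪x - y, u - v⟫) → u ∈ A x)
    (Z : Set H) (hZ : Z = {z : H | (0 : H) ∈ A z}) (hZne : Z.Nonempty)
    (xbar : H) (hxbar : xbar ∈ Z)
    (κ δ : ℝ) (hκ : 0 < κ) (hδ : 0 < δ)
    (hsub : ∀ w : H, ‖w - xbar‖ ≤ δ → ∀ u ∈ A w, Metric.infDist w Z ≤ κ * ‖u‖)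
    (c : ℕ → ℝ) (hc : ∀ k, 0 < c k) (hcinf : 0 < ⨅ k, c k)
    (J : ℕ → H → H) (hJ : ∀ k, ∀ w : H, (1 / c k) • (w - J k w) ∈ A (J k w))
    (lam : ℕ → ℝ)
    (hlaminf : 0 < ⨅ k, lam k)
    (hlamsup : ∃ b : ℝ, b < 2 ∧ ∀ k, lam k ≤ b)
    (x : ℕ → H) (hx0 : ‖x 0 - xbar‖ ≤ δ)
    (hx : ∀ k, x (k + 1) = (1 - lam k) • x k + lam k • J k (x k))
    (ρ : ℝ) (hρ : ρ = ⨆ k, (1 - lam k * (2 - lam k) / (1 + κ / c k) ^ 2)) :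
    ρ < 1 ∧ ∃ xhat ∈ Z,
      (∀ k : ℕ, ‖x k - xhat‖ ≤ 2 * ρ ^ ((k : ℝ) / 2) * Metric.infDist (x 0) Z) ∧
      Filter.Tendsto x Filter.atTop (nhds xhat) := by
  obtain ⟨b, hb2, hbub⟩ := hlamsup
  -- basic bounds on lam and c
  have hlamBdd : BddBelow (Set.range lam) := by
    by_contra h
    rw [Real.iInf_of_not_bddBelow h] at hlaminf
    exact lt_irrefl 0 hlaminf
  have hlamlo : ∀ k, (⨅ k, lam k) ≤ lam k := fun k => ciInf_le hlamBdd k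
  have hlampos : ∀ k, 0 < lam k := fun k => lt_of_lt_of_le hlaminf (hlamlo k)
  have hlamlt2 : ∀ k, lam k < 2 := fun k => lt_of_le_of_lt (hbub k) hb2
  have hclo : ∀ k, (⨅ k, c k) ≤ c k := fun k =>
    ciInf_le ⟨0, by rintro r ⟨k, rfl⟩; exact (hc k).le⟩ k
  have hb0 : 0 < b := lt_of_lt_of_le (hlampos 0) (hbub 0)
  -- zeros of A
  have hzero : ∀ z ∈ Z, (0 : H) ∈ A z := by
    intro z hz; rw [hZ] at hz; exact hz
  -- the function under the sup
  set g : ℕ → ℝ := fun k => 1 - lam k * (2 - lam k) / (1 + κ / c k) ^ 2 with hg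
  have hden_pos : ∀ k, (0:ℝ) < (1 + κ / c k) ^ 2 := by
    intro k
    have := div_pos hκ (hc k)
    nlinarith
  have hden_gt1 : ∀ k, (1:ℝ) < (1 + κ / c k) ^ 2 := by
    intro k
    have h1 : 0 < κ / c k := div_pos hκ (hc k)
    nlinarith
  have hfrac_nonneg : ∀ k, 0 ≤ lam k * (2 - lam k) / (1 + κ / c k) ^ 2 := by
    intro k
    have := hlampos k; have := hlamlt2 k
    have h1 : 0 ≤ lam k * (2 - lam k) := by nlinarith
    positivity
  have hg_le1 : ∀ k, g k ≤ 1 := by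
    intro k; have := hfrac_nonneg k; simp only [hg]; linarith
  have hg_pos : ∀ k, 0 < g k := by
    intro k
    have h1 : lam k * (2 - lam k) ≤ 1 := by nlinarith [sq_nonneg (1 - lam k)]
    have h2 := hden_gt1 k
    have h3 : lam k * (2 - lam k) / (1 + κ / c k) ^ 2 < 1 := by
      rw [div_lt_one (hden_pos k)]; linarith
    simp only [hg]; linarith
  have hgBdd : BddAbove (Set.range g) := ⟨1, by rintro r ⟨k, rfl⟩; exact hg_le1 k⟩
  have hρ_ge : ∀ k, g k ≤ ρ := by intro k; rw [hρ]; exact le_ciSup hgBdd k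
  have hρ_pos : 0 < ρ := lt_of_lt_of_le (hg_pos 0) (hρ_ge 0)
  have hρ_nonneg : 0 ≤ ρ := hρ_pos.le
  -- ρ < 1
  have hρ_lt1 : ρ < 1 := by
    have hkey : ∀ k, g k ≤ 1 - (⨅ k, lam k) * (2 - b) / (1 + κ / (⨅ k, c k)) ^ 2 := by
      intro k
      have h1 : (⨅ k, lam k) * (2 - b) ≤ lam k * (2 - lam k) := by
        have := hlamlo k; have := hbub k; have := hlamlt2 k
        nlinarith [hlaminf]
      have h2 : (1 + κ / c k) ^ 2 ≤ (1 + κ / (⨅ k, c k)) ^ 2 := by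
        have h3 : κ / c k ≤ κ / (⨅ k, c k) := by
          apply div_le_div_of_nonneg_left hκ.le hcinf (hclo k)
        have h4 : 0 < 1 + κ / c k := by
          have := div_pos hκ (hc k); linarith
        nlinarith
      have h5 : (⨅ k, lam k) * (2 - b) / (1 + κ / (⨅ k, c k)) ^ 2
          ≤ lam k * (2 - lam k) / (1 + κ / c k) ^ 2 := by
        apply div_le_div₀ (by nlinarith [hlampos k, hlamlt2 k]) h1 (hden_pos k) h2
      simp only [hg]; linarith
    have hpos : 0 < (⨅ k, lam k) * (2 - b) / (1 + κ / (⨅ k, c k)) ^ 2 := by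
      have h6 : 0 < 2 - b := by linarith
      have h7 : 0 < κ / (⨅ k, c k) := div_pos hκ hcinf
      exact div_pos (mul_pos hlaminf h6) (by nlinarith)
    have : ρ ≤ 1 - (⨅ k, lam k) * (2 - b) / (1 + κ / (⨅ k, c k)) ^ 2 := by
      rw [hρ]; exact ciSup_le hkey
    linarith
  -- firm nonexpansiveness type inequality
  have firm : ∀ k (w z : H), (0 : H) ∈ A z → 0 ≤ ⟪J k w - z, w - J k w⟫ := by
    intro k w z hz
    have h1 := hmono (J k w) z ((1 / c k) • (w - J k w)) 0 (hJ k w) hz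
    rw [sub_zero, real_inner_smul_right] at h1
    have h2 : 0 < 1 / c k := one_div_pos.2 (hc k)
    nlinarith
  -- Fejér inequality
  have fejer : ∀ k (z : H), z ∈ Z →
      ‖x (k+1) - z‖ ^ 2 + lam k * (2 - lam k) * ‖x k - J k (x k)‖ ^ 2 ≤ ‖x k - z‖ ^ 2 := by
    intro k z hz
    have hf := firm k (x k) z (hzero z hz)
    have hstep : x (k+1) - z = (x k - z) - lam k • (x k - J k (x k)) := by
      rw [hx k]; module
    have hinner : ⟪x k - z, x k - J k (x k)⟫
        = ‖x k - J k (x k)‖ ^ 2 + ⟪J k (x k) - z, x k - J k (x k)⟫ := by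
      have h3 : x k - z = (x k - J k (x k)) + (J k (x k) - z) := by abel
      rw [h3, inner_add_left, real_inner_self_eq_norm_sq]
    have hexp : ‖x (k+1) - z‖ ^ 2 = ‖x k - z‖ ^ 2
        - 2 * (lam k * ⟪x k - z, x k - J k (x k)⟫)
        + (lam k) ^ 2 * ‖x k - J k (x k)‖ ^ 2 := by
      rw [hstep, @norm_sub_sq_real, real_inner_smul_right, norm_smul]
      have : |lam k| = lam k := abs_of_pos (hlampos k)
      rw [Real.norm_eq_abs, this]
      ring
    rw [hexp, hinner]
    nlinarith [hlampos k, sq_nonneg ‖x k - J k (x k)‖]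
  -- monotone distances to Z
  have fejer_norm : ∀ k (z : H), z ∈ Z → ‖x (k+1) - z‖ ≤ ‖x k - z‖ := by
    intro k z hz
    have h1 := fejer k z hz
    have h2 : 0 ≤ lam k * (2 - lam k) := by nlinarith [hlampos k, hlamlt2 k]
    nlinarith [norm_nonneg (x (k+1) - z), norm_nonneg (x k - z), sq_nonneg ‖x k - J k (x k)‖,
      mul_nonneg h2 (sq_nonneg ‖x k - J k (x k)‖)]
  have hball : ∀ k, ‖x k - xbar‖ ≤ δ := by
    intro k
    induction k with
    | zero => exact hx0
    | succ n ih => exact le_trans (fejer_norm n xbar hxbar) ih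
  -- the resolvent point stays in the ball
  have hyball : ∀ k, ‖J k (x k) - xbar‖ ≤ δ := by
    intro k
    have hf := firm k (x k) xbar (hzero xbar hxbar)
    have h3 : x k - xbar = (x k - J k (x k)) + (J k (x k) - xbar) := by abel
    have hexp : ‖x k - xbar‖ ^ 2 = ‖x k - J k (x k)‖ ^ 2
        + 2 * ⟪x k - J k (x k), J k (x k) - xbar⟫ + ‖J k (x k) - xbar‖ ^ 2 := by
      rw [h3, @norm_add_sq_real]
    have hcomm : ⟪x k - J k (x k), J k (x k) - xbar⟫ = ⟪J k (x k) - xbar, x k - J k (x k)⟫ :=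
      real_inner_comm _ _
    have h4 : ‖J k (x k) - xbar‖ ^ 2 ≤ ‖x k - xbar‖ ^ 2 := by
      rw [hexp, hcomm]; nlinarith [sq_nonneg ‖x k - J k (x k)‖]
    have h5 := hball k
    nlinarith [norm_nonneg (J k (x k) - xbar), norm_nonneg (x k - xbar)]
  -- error bound from subregularity
  have hDx : ∀ k, Metric.infDist (x k) Z ≤ (1 + κ / c k) * ‖x k - J k (x k)‖ := by
    intro k
    have h1 : Metric.infDist (J k (x k)) Z ≤ κ * ‖(1 / c k) • (x k - J k (x k))‖ :=
      hsub (J k (x k)) (hyball k) _ (hJ k (x k))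
    have h2 : ‖(1 / c k) • (x k - J k (x k))‖ = (1 / c k) * ‖x k - J k (x k)‖ := by
      rw [norm_smul, Real.norm_eq_abs, abs_of_pos (one_div_pos.2 (hc k))]
    have h3 : Metric.infDist (x k) Z
        ≤ Metric.infDist (J k (x k)) Z + dist (x k) (J k (x k)) :=
      Metric.infDist_le_infDist_add_dist
    rw [dist_eq_norm] at h3
    rw [h2] at h1
    have : κ * (1 / c k * ‖x k - J k (x k)‖) + ‖x k - J k (x k)‖
        = (1 + κ / c k) * ‖x k - J k (x k)‖ := by field_simp; ring
    linarith
  -- contraction of squared distances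
  have key : ∀ k, (Metric.infDist (x (k+1)) Z) ^ 2 ≤ ρ * (Metric.infDist (x k) Z) ^ 2 := by
    intro k
    have hs_pos : 0 < lam k * (2 - lam k) := by nlinarith [hlampos k, hlamlt2 k]
    have hM_nonneg : 0 ≤ (Metric.infDist (x (k+1)) Z) ^ 2
        + lam k * (2 - lam k) * ‖x k - J k (x k)‖ ^ 2 :=
      add_nonneg (sq_nonneg _) (mul_nonneg hs_pos.le (sq_nonneg _))
    have hA : (Metric.infDist (x (k+1)) Z) ^ 2 + lam k * (2 - lam k) * ‖x k - J k (x k)‖ ^ 2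
        ≤ (Metric.infDist (x k) Z) ^ 2 := by
      have h1 : Real.sqrt ((Metric.infDist (x (k+1)) Z) ^ 2
          + lam k * (2 - lam k) * ‖x k - J k (x k)‖ ^ 2) ≤ Metric.infDist (x k) Z := by
        apply le_infDist_aux hZne
        intro z hz
        have h2 : Metric.infDist (x (k+1)) Z ≤ ‖x (k+1) - z‖ := by
          rw [← dist_eq_norm]; exact Metric.infDist_le_dist_of_mem hz
        have h2' : (Metric.infDist (x (k+1)) Z) ^ 2 ≤ ‖x (k+1) - z‖ ^ 2 :=
          pow_le_pow_left₀ Metric.infDist_nonneg h2 2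
        have h3 := fejer k z hz
        rw [dist_eq_norm]
        calc Real.sqrt ((Metric.infDist (x (k+1)) Z) ^ 2
              + lam k * (2 - lam k) * ‖x k - J k (x k)‖ ^ 2)
            ≤ Real.sqrt (‖x k - z‖ ^ 2) := Real.sqrt_le_sqrt (by linarith)
          _ = ‖x k - z‖ := Real.sqrt_sq (norm_nonneg _)
      calc (Metric.infDist (x (k+1)) Z) ^ 2 + lam k * (2 - lam k) * ‖x k - J k (x k)‖ ^ 2
          = Real.sqrt ((Metric.infDist (x (k+1)) Z) ^ 2
              + lam k * (2 - lam k) * ‖x k - J k (x k)‖ ^ 2) ^ 2 :=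
            (Real.sq_sqrt hM_nonneg).symm
        _ ≤ (Metric.infDist (x k) Z) ^ 2 := pow_le_pow_left₀ (Real.sqrt_nonneg _) h1 2
    have hB : (1 - g k) * (Metric.infDist (x k) Z) ^ 2
        ≤ lam k * (2 - lam k) * ‖x k - J k (x k)‖ ^ 2 := by
      have hq : 1 - g k = lam k * (2 - lam k) / (1 + κ / c k) ^ 2 := by
        simp only [hg]; ring
      have h4 : (Metric.infDist (x k) Z) ^ 2 ≤ ((1 + κ / c k) * ‖x k - J k (x k)‖) ^ 2 :=
        pow_le_pow_left₀ Metric.infDist_nonneg (hDx k) 2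
      have hne : (1 + κ / c k) ^ 2 ≠ 0 := ne_of_gt (hden_pos k)
      have h5 : lam k * (2 - lam k) / (1 + κ / c k) ^ 2 * ((1 + κ / c k) * ‖x k - J k (x k)‖) ^ 2
          = lam k * (2 - lam k) * ‖x k - J k (x k)‖ ^ 2 := by
        rw [mul_pow, ← mul_assoc, div_mul_cancel₀ _ hne]
      rw [hq, ← h5]
      exact mul_le_mul_of_nonneg_left h4 (div_nonneg hs_pos.le (hden_pos k).le)
    have hfin : g k * (Metric.infDist (x k) Z) ^ 2 ≤ ρ * (Metric.infDist (x k) Z) ^ 2 :=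
      mul_le_mul_of_nonneg_right (hρ_ge k) (sq_nonneg _)
    linarith
  -- geometric decay of distances
  have Dbound : ∀ k, (Metric.infDist (x k) Z) ^ 2 ≤ ρ ^ k * (Metric.infDist (x 0) Z) ^ 2 := by
    intro k
    induction k with
    | zero => simp
    | succ n ih =>
      calc (Metric.infDist (x (n+1)) Z) ^ 2 ≤ ρ * (Metric.infDist (x n) Z) ^ 2 := key n
        _ ≤ ρ * (ρ ^ n * (Metric.infDist (x 0) Z) ^ 2) :=
            mul_le_mul_of_nonneg_left ih hρ_nonneg
        _ = ρ ^ (n+1) * (Metric.infDist (x 0) Z) ^ 2 := by ring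
  have Dlin : ∀ k, Metric.infDist (x k) Z
      ≤ (Real.sqrt ρ) ^ k * Metric.infDist (x 0) Z := by
    intro k
    have h1 : ((Real.sqrt ρ) ^ k * Metric.infDist (x 0) Z) ^ 2
        = ρ ^ k * (Metric.infDist (x 0) Z) ^ 2 := by
      rw [mul_pow, ← pow_mul, mul_comm k 2, pow_mul, Real.sq_sqrt hρ_nonneg]
    have h2 : (Metric.infDist (x k) Z) ^ 2 ≤ ((Real.sqrt ρ) ^ k * Metric.infDist (x 0) Z) ^ 2 := by
      rw [h1]; exact Dbound k
    exact le_of_pow_le_pow_left₀ two_ne_zero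
      (mul_nonneg (pow_nonneg (Real.sqrt_nonneg ρ) k) Metric.infDist_nonneg) h2
  have hr1 : Real.sqrt ρ < 1 := by
    rw [show (1:ℝ) = Real.sqrt 1 by simp]
    exact Real.sqrt_lt_sqrt hρ_nonneg hρ_lt1
  have hr0 : 0 ≤ Real.sqrt ρ := Real.sqrt_nonneg ρ
  -- step bound and Cauchy
  have hstepb : ∀ k, dist (x k) (x (k+1))
      ≤ 2 * Metric.infDist (x 0) Z * (Real.sqrt ρ) ^ k := by
    intro k
    have h1 : dist (x k) (x (k+1)) ≤ 2 * Metric.infDist (x k) Z := by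
      have h2 : dist (x k) (x (k+1)) / 2 ≤ Metric.infDist (x k) Z := by
        apply le_infDist_aux hZne
        intro z hz
        have h3 : dist (x (k+1)) z ≤ dist (x k) z := by
          rw [dist_eq_norm, dist_eq_norm]; exact fejer_norm k z hz
        have h4 : dist (x k) (x (k+1)) ≤ dist (x k) z + dist (x (k+1)) z := by
          rw [dist_comm (x (k+1)) z] at *
          exact dist_triangle _ _ _
        linarith
      linarith
    calc dist (x k) (x (k+1)) ≤ 2 * Metric.infDist (x k) Z := h1
      _ ≤ 2 * ((Real.sqrt ρ) ^ k * Metric.infDist (x 0) Z) := by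
          have := Dlin k; linarith
      _ = 2 * Metric.infDist (x 0) Z * (Real.sqrt ρ) ^ k := by ring
  have hcauchy : CauchySeq x := cauchySeq_of_le_geometric _ _ hr1 hstepb
  obtain ⟨xhat, hxhat⟩ := cauchySeq_tendsto_of_complete hcauchy
  -- Z is closed
  have hZclosed : IsClosed Z := by
    have hset : Z = ⋂ (y : H), ⋂ (v : H), ⋂ (_ : v ∈ A y), {w : H | 0 ≤ ⟪w - y, (0:H) - v⟫} := by
      ext w
      simp only [Set.mem_iInter, Set.mem_setOf_eq]
      constructor
      · intro hw y v hv
        exact hmono w y 0 v (hzero w hw) hv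
      · intro h
        rw [hZ]
        exact hmax w 0 (fun y v hv => h y v hv)
    rw [hset]
    exact isClosed_iInter fun y => isClosed_iInter fun v => isClosed_iInter fun _ =>
      isClosed_le continuous_const
        (Continuous.inner (continuous_id.sub continuous_const) continuous_const)
  -- limit distance is 0
  have hDlim : Filter.Tendsto (fun k => Metric.infDist (x k) Z) Filter.atTop (nhds 0) := by
    apply squeeze_zero (fun k => Metric.infDist_nonneg) (fun k => Dlin k)
    have h1 : Filter.Tendsto (fun k : ℕ => (Real.sqrt ρ) ^ k) Filter.atTop (nhds 0) :=
      tendsto_pow_atTop_nhds_zero_of_lt_one hr0 hr1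
    have := h1.mul_const (Metric.infDist (x 0) Z)
    simpa using this
  have hDhat : Metric.infDist xhat Z = 0 := by
    have h1 : Filter.Tendsto (fun k => Metric.infDist (x k) Z) Filter.atTop
        (nhds (Metric.infDist xhat Z)) :=
      ((Metric.continuous_infDist_pt Z).tendsto xhat).comp hxhat
    exact tendsto_nhds_unique h1 hDlim
  have hxhatZ : xhat ∈ Z := (hZclosed.mem_iff_infDist_zero hZne).2 hDhat
  -- Fejér monotone limit bound
  have hlim_le : ∀ (z : H), z ∈ Z → ∀ k, ‖xhat - z‖ ≤ ‖x k - z‖ := by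
    intro z hz k
    have hmono' : ∀ m, k ≤ m → ‖x m - z‖ ≤ ‖x k - z‖ := by
      intro m hm
      induction m, hm using Nat.le_induction with
      | base => exact le_refl _
      | succ n hn ih => exact le_trans (fejer_norm n z hz) ih
    have htend : Filter.Tendsto (fun m => ‖x m - z‖) Filter.atTop (nhds ‖xhat - z‖) :=
      ((continuous_norm.comp (continuous_id.sub continuous_const)).tendsto xhat).comp hxhat
    apply le_of_tendsto htend
    filter_upwards [Filter.eventually_ge_atTop k] with m hm
    exact hmono' m hm
  -- final bound
  refine ⟨hρ_lt1, xhat, hxhatZ, ?_, hxhat⟩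
  intro k
  have h1 : ‖x k - xhat‖ ≤ 2 * Metric.infDist (x k) Z := by
    have h2 : ‖x k - xhat‖ / 2 ≤ Metric.infDist (x k) Z := by
      apply le_infDist_aux hZne
      intro z hz
      have h3 : ‖x k - xhat‖ ≤ ‖x k - z‖ + ‖xhat - z‖ := by
        have := norm_sub_le_norm_sub_add_norm_sub (x k) z xhat
        calc ‖x k - xhat‖ ≤ ‖x k - z‖ + ‖z - xhat‖ := norm_sub_le_norm_sub_add_norm_sub _ _ _
          _ = ‖x k - z‖ + ‖xhat - z‖ := by rw [norm_sub_rev z xhat]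
      have h4 := hlim_le z hz k
      rw [dist_eq_norm]
      linarith
    linarith
  have hrpow : ρ ^ ((k : ℝ) / 2) = (Real.sqrt ρ) ^ k := by
    rw [show ((k : ℝ) / 2) = (1/2 : ℝ) * (k : ℝ) by ring, Real.rpow_mul hρ_nonneg,
      ← Real.sqrt_eq_rpow, Real.rpow_natCast]
  rw [hrpow]
  calc ‖x k - xhat‖ ≤ 2 * Metric.infDist (x k) Z := h1
    _ ≤ 2 * ((Real.sqrt ρ) ^ k * Metric.infDist (x 0) Z) := by
        have := Dlin k; linarith
    _ = 2 * (Real.sqrt ρ) ^ k * Metric.infDist (x 0) Z := by ring
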